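/- Let Ω = {(w,z) ∈ ℝ² : z ≥ w²} be the supergraph of a parabola, with Hilbert metric d_Ω. Fix a > 0 and for t ≥ 0 let p_t = (-a, a² + t) and q_t = (a, a² + t). Then d_Ω(p_t, q_t) = d_{K_t}(-a, a) where K_t = (-√(a²+t), √(a²+t)) ⊂ ℝ (the Hilbert metric of an interval), and consequently d_Ω(p_t, q_t) · √t → 2a as t → ∞, so the distance decays to 0 like t^{-1/2}. -/

import Mathlib

open Filter

/-- Hilbert "metric" of an interval `(α, β)` between points `x` and `y`:
`(1/2) log( ((β-x)(y-α)) / ((β-y)(x-α)) )`. -/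
noncomputable def intervalHilbert (α β x y : ℝ) : ℝ :=
  (1/2) * Real.log (((β - x) * (y - α)) / ((β - y) * (x - α)))

/-- The supergraph of the parabola: `Ω = {(w,z) : z ≥ w²}`. -/
def parabolaDomain : Set (ℝ × ℝ) := {p | p.1 ^ 2 ≤ p.2}

/-- Parameters `s` for which the point `(1-s)p + sq` of the chord through `p, q`
lies in the interior of the parabola domain. -/
def chordSet (p q : ℝ × ℝ) : Set ℝ :=
  {s | ((1 - s) • p + s • q) ∈ interior parabolaDomain}

open Classical in
/-- The Hilbert distance between `p` and `q` in the parabola domain, computed via the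
cross-ratio along the chord through them (with the ray formula when the chord is a ray). -/
noncomputable def hilbertDist (p q : ℝ × ℝ) : ℝ :=
  if BddAbove (chordSet p q) then
    intervalHilbert (sInf (chordSet p q)) (sSup (chordSet p q)) 0 1
  else (1/2) * Real.log ((1 - sInf (chordSet p q)) / (0 - sInf (chordSet p q)))

lemma interior_parabolaDomain :
    interior parabolaDomain = {p : ℝ × ℝ | p.1 ^ 2 < p.2} := by
  apply subset_antisymm
  · intro p hp
    obtain ⟨ε, hε, hball⟩ := Metric.isOpen_iff.mp isOpen_interior p hp
    have hmem : ((p.1, p.2 - ε / 2) : ℝ × ℝ) ∈ parabolaDomain := by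
      apply interior_subset
      apply hball
      rw [Metric.mem_ball, Prod.dist_eq]
      simp only [dist_self]
      rw [Real.dist_eq]
      have : |p.2 - ε / 2 - p.2| = ε / 2 := by
        rw [abs_of_nonpos (by linarith)]; ring
      rw [this]
      simp only [max_lt_iff]
      constructor <;> linarith
    have : p.1 ^ 2 ≤ p.2 - ε / 2 := hmem
    exact lt_of_le_of_lt this (by linarith : p.2 - ε / 2 < p.2)
  · have hopen : IsOpen {p : ℝ × ℝ | p.1 ^ 2 < p.2} :=
      isOpen_lt (continuous_fst.pow 2) continuous_snd
    have hsub : {p : ℝ × ℝ | p.1 ^ 2 < p.2} ⊆ parabolaDomain := by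
      intro p hp
      simp only [Set.mem_setOf_eq] at hp
      exact le_of_lt hp
    exact interior_maximal hsub hopen

lemma chordSet_eq (a t : ℝ) (ha : 0 < a) (ht : 0 ≤ t) :
    chordSet (-a, a ^ 2 + t) (a, a ^ 2 + t)
      = Set.Ioo ((a - Real.sqrt (a ^ 2 + t)) / (2 * a))
          ((a + Real.sqrt (a ^ 2 + t)) / (2 * a)) := by
  have hb0 : (0:ℝ) ≤ a ^ 2 + t := by positivity
  set b := Real.sqrt (a ^ 2 + t) with hbdef
  have hb2 : b ^ 2 = a ^ 2 + t := Real.sq_sqrt hb0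
  have hbpos : 0 < b := Real.sqrt_pos.mpr (by positivity)
  ext s
  simp only [chordSet, Set.mem_setOf_eq, interior_parabolaDomain, Prod.smul_mk, smul_eq_mul,
    Prod.mk_add_mk, Set.mem_Ioo]
  rw [div_lt_iff₀ (by positivity : (0:ℝ) < 2 * a), lt_div_iff₀ (by positivity : (0:ℝ) < 2 * a)]
  constructor
  · intro h
    constructor <;> nlinarith [h, hbpos, hb2]
  · rintro ⟨h1, h2⟩
    nlinarith [h1, h2, hbpos, hb2]

lemma parabola_part1 (a : ℝ) (ha : 0 < a) (t : ℝ) (ht : 0 ≤ t) :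
    hilbertDist (-a, a ^ 2 + t) (a, a ^ 2 + t)
      = intervalHilbert (-(Real.sqrt (a ^ 2 + t))) (Real.sqrt (a ^ 2 + t)) (-a) a := by
  have hb0 : (0:ℝ) ≤ a ^ 2 + t := by positivity
  set b := Real.sqrt (a ^ 2 + t) with hbdef
  have hbpos : 0 < b := Real.sqrt_pos.mpr (by positivity)
  have hlt : (a - b) / (2 * a) < (a + b) / (2 * a) := by
    rw [div_lt_div_iff₀ (by positivity) (by positivity)]
    nlinarith
  rw [hilbertDist, chordSet_eq a t ha ht, if_pos bddAbove_Ioo, csInf_Ioo hlt, csSup_Ioo hlt]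
  unfold intervalHilbert
  congr 1
  have h2a : (2 * a) ≠ 0 := by positivity
  have e1 : (a + b) / (2 * a) - 0 = (a + b) / (2 * a) := by ring
  have e2 : 1 - (a - b) / (2 * a) = (a + b) / (2 * a) := by field_simp; ring
  have e3 : (a + b) / (2 * a) - 1 = (b - a) / (2 * a) := by field_simp; ring
  have e4 : 0 - (a - b) / (2 * a) = (b - a) / (2 * a) := by ring
  rw [e1, e2, e3, e4, div_mul_div_comm, div_mul_div_comm,
    div_div_div_cancel_right₀ (by positivity : (2 * a) * (2 * a) ≠ 0)]
  congr 1 <;> ring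

theorem parabola_hilbert_distance_decay (a : ℝ) (ha : 0 < a) :
    (∀ t : ℝ, 0 ≤ t →
      hilbertDist (-a, a ^ 2 + t) (a, a ^ 2 + t)
        = intervalHilbert (-(Real.sqrt (a ^ 2 + t))) (Real.sqrt (a ^ 2 + t)) (-a) a) ∧
    Tendsto (fun t : ℝ => hilbertDist (-a, a ^ 2 + t) (a, a ^ 2 + t) * Real.sqrt t)
      atTop (nhds (2 * a)) := by
  refine ⟨fun t ht => parabola_part1 a ha t ht, ?_⟩
  have hsqrt_top : Tendsto Real.sqrt atTop atTop := by
    apply tendsto_atTop_atTop.mpr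
    intro c
    exact ⟨c ^ 2, fun x hx => by
      calc c ≤ |c| := le_abs_self c
        _ = Real.sqrt (c ^ 2) := (Real.sqrt_sq_eq_abs c).symm
        _ ≤ Real.sqrt x := Real.sqrt_le_sqrt hx⟩
  have hy : Tendsto (fun t : ℝ => Real.sqrt (a ^ 2 + t) - a) atTop atTop := by
    apply tendsto_atTop_add_const_right
    exact hsqrt_top.comp (tendsto_atTop_add_const_left _ _ tendsto_id)
  have h2 : Tendsto (fun t : ℝ =>
      (Real.sqrt (a ^ 2 + t) - a) * Real.log (1 + (2 * a) / (Real.sqrt (a ^ 2 + t) - a)))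
      atTop (nhds (2 * a)) :=
    (Real.tendsto_mul_log_one_add_div_atTop (2 * a)).comp hy
  have h1 : Tendsto (fun t : ℝ => Real.sqrt t / (Real.sqrt (a ^ 2 + t) - a))
      atTop (nhds 1) := by
    have haux : Tendsto (fun t : ℝ => Real.sqrt (a ^ 2 / t + 1) + a / Real.sqrt t)
        atTop (nhds 1) := by
      have l1 : Tendsto (fun t : ℝ => a ^ 2 / t + 1) atTop (nhds 1) := by
        have := (tendsto_const_nhds (x := a ^ 2) (f := atTop (α := ℝ))).div_atTop tendsto_id
        simpa using this.add tendsto_const_nhds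
      have l2 : Tendsto (fun t : ℝ => Real.sqrt (a ^ 2 / t + 1)) atTop (nhds 1) := by
        have := (Real.continuous_sqrt.tendsto 1).comp l1
        simpa [Function.comp_def] using this
      have l3 : Tendsto (fun t : ℝ => a / Real.sqrt t) atTop (nhds 0) :=
        tendsto_const_nhds.div_atTop hsqrt_top
      simpa using l2.add l3
    apply haux.congr'
    filter_upwards [eventually_gt_atTop 0] with t htpos
    have hb0 : (0:ℝ) ≤ a ^ 2 + t := by positivity
    have hab : a < Real.sqrt (a ^ 2 + t) := (Real.lt_sqrt ha.le).mpr (by linarith)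
    have hst : (0:ℝ) < Real.sqrt t := Real.sqrt_pos.mpr htpos
    have hsq : Real.sqrt (a ^ 2 / t + 1) = Real.sqrt (a ^ 2 + t) / Real.sqrt t := by
      rw [show a ^ 2 / t + 1 = (a ^ 2 + t) / t by field_simp, Real.sqrt_div hb0]
    rw [hsq, ← add_div, eq_comm, div_eq_div_iff (by linarith) hst.ne']
    have := Real.mul_self_sqrt htpos.le
    nlinarith [Real.sq_sqrt hb0, this]
  have hprod := h1.mul h2
  rw [one_mul] at hprod
  apply hprod.congr'
  filter_upwards [eventually_gt_atTop 0] with t htpos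
  have hb0 : (0:ℝ) ≤ a ^ 2 + t := by positivity
  set b := Real.sqrt (a ^ 2 + t) with hbdef
  have hab : a < b := (Real.lt_sqrt ha.le).mpr (by linarith)
  have hba : b - a ≠ 0 := by linarith
  have key : hilbertDist (-a, a ^ 2 + t) (a, a ^ 2 + t)
      = Real.log (1 + 2 * a / (b - a)) := by
    rw [parabola_part1 a ha t htpos.le]
    unfold intervalHilbert
    have hr : ((b - -a) * (a - -b)) / ((b - a) * (-a - -b)) = ((b + a) / (b - a)) ^ 2 := by
      rw [div_pow]; congr 1 <;> ring
    rw [hr, Real.log_pow]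
    have hfrac : (b + a) / (b - a) = 1 + 2 * a / (b - a) := by
      field_simp
      ring
    rw [hfrac]; push_cast; ring
  rw [key]
  field_simp
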